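/- (Lemma 4.6.) Let P be a finite set of points in the plane in convex position with radii r_p ≥ 0 and weights w_p, let S be a dominating set of the disk graph G(P), and let φ : 𝒜 → S be a Lemma-3.1 assignment with 𝒜 = ⟨α_1,…,α_m⟩. Suppose p_i ∈ S is a rank-t center of 𝒜[g,h] whose main sublist α_f lies in 𝒜[g,h] but is not an end sublist of 𝒜[g,h] (α_f ≠ α_g and α_f ≠ α_h), and the counterclockwise end sublist α_h belongs to 𝒜_{p_i}. Then there exists t' with 2 ≤ t' ≤ t − 1 such that p_i is a rank-t' center of 𝒜[f,h] and a rank-(t−t'+1) center of 𝒜[g,f]; furthermore, w(S[g,h]) = w(S[f,h]) + w(S[g,f]) − w_{p_i}. -/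

import Mathlib

noncomputable section

/-- The plane ℝ². -/
abbrev Plane : Type := EuclideanSpace ℝ (Fin 2)

/-- Two point sets `A` and `B` are line-separable: there is a nonzero linear functional
`u` and a constant `c` with `u ≤ c` on `A` and `u ≥ c` on `B`. -/
def LineSep (A B : Set Plane) : Prop :=
  ∃ u : Plane →ₗ[ℝ] ℝ, u ≠ 0 ∧ ∃ c : ℝ, (∀ a ∈ A, u a ≤ c) ∧ (∀ b ∈ B, c ≤ u b)

/-- The planar cross product (signed area determinant). -/
def det2 (u v : Plane) : ℝ := u 0 * v 1 - u 1 * v 0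

/-- `p : ZMod n → Plane` lists points in convex position in counterclockwise order:
every point other than `p i` and `p (i+1)` lies strictly to the left of the directed
line from `p i` to `p (i+1)`. -/
def CCWConvex {n : ℕ} (p : ZMod n → Plane) : Prop :=
  ∀ i j : ZMod n, j ≠ i → j ≠ i + 1 →
    0 < det2 (p (i + 1) - p i) (p j - p i)

/-- `S` is a dominating set of the disk graph on the points `p 0, …, p (n-1)` with
radii `r`: `S` is a set of these points, and the disk of every point intersects the
disk of some point of `S`. -/
def IsDominating {n : ℕ} (p : ZMod n → Plane) (r : Plane → ℝ) (S : Set Plane) : Prop :=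
  S ⊆ Set.range p ∧ ∀ q ∈ Set.range p, ∃ s ∈ S, dist q s ≤ r q + r s

/-- A partition of the cyclic point sequence `p 0, …, p (n-1)` into `m` nonempty
contiguous sublists `α_0, …, α_{m-1}` listed counterclockwise: the sublist `α_j`
consists of the `len j` consecutive points starting at cyclic position
`start + (sum of the lengths of the sublists before j)`. -/
structure SublistPartition (n m : ℕ) [NeZero m] where
  start : ZMod n
  len : ZMod m → ℕ
  len_pos : ∀ j, 0 < len j
  len_sum : ∑ j, len j = n

variable {n m : ℕ} [NeZero m]

/-- The cyclic position offset at which the sublist `α_j` starts. -/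
def SublistPartition.offset (A : SublistPartition n m) (j : ZMod m) : ℕ :=
  ∑ j' ∈ Finset.univ.filter (fun j' : ZMod m => j'.val < j.val), A.len j'

/-- The set of points of the sublist `α_j`. -/
def SublistPartition.block (A : SublistPartition n m) (p : ZMod n → Plane)
    (j : ZMod m) : Set Plane :=
  (fun t : ℕ => p (A.start + (A.offset j : ZMod n) + (t : ZMod n))) '' Set.Iio (A.len j)

/-- The group `𝒜_s` of a center `s`: the points of all sublists assigned to `s`. -/
def group (A : SublistPartition n m) (p : ZMod n → Plane) (φ : ZMod m → Plane)
    (s : Plane) : Set Plane :=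
  {x | ∃ j, φ j = s ∧ x ∈ A.block p j}

/-- `φ` is an assignment of the sublists of the partition `A` to points of `S`:
each sublist `α_j` is assigned a point `φ j ∈ S` whose disk intersects the disk
of every point of `α_j`. -/
def IsAssignment (A : SublistPartition n m) (p : ZMod n → Plane) (r : Plane → ℝ)
    (S : Set Plane) (φ : ZMod m → Plane) : Prop :=
  (∀ j, φ j ∈ S) ∧ ∀ j, ∀ x ∈ A.block p j, dist x (φ j) ≤ r x + r (φ j)

/-- A Lemma-3.1 assignment: an assignment that is line-separable, such that
(1) every `s ∈ S` lies in one of its own sublists (its main sublist), and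
(2) cyclically adjacent sublists are assigned to different points of `S`. -/
def IsLemma31Assignment (A : SublistPartition n m) (p : ZMod n → Plane) (r : Plane → ℝ)
    (S : Set Plane) (φ : ZMod m → Plane) : Prop :=
  IsAssignment A p r S φ ∧
  (∀ s ∈ S, ∀ s' ∈ S, s ≠ s' → LineSep (group A p φ s) (group A p φ s')) ∧
  (∀ s ∈ S, ∃ j, φ j = s ∧ s ∈ A.block p j) ∧
  (∀ j : ZMod m, j + 1 ≠ j → φ (j + 1) ≠ φ j)

/-- `Idx g h` is the set of indices of the sublists `α_g, α_{g+1}, …, α_h`, taken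
counterclockwise from `g` to `h` inclusive (so `Idx g g = {g}`). -/
def Idx {m : ℕ} [NeZero m] (g h : ZMod m) : Finset (ZMod m) :=
  (Finset.range ((h - g).val + 1)).image (fun t : ℕ => g + (t : ZMod m))

/-- `S[g,h]`: the points of `S` whose group contains some sublist of `𝒜[g,h]`. -/
def Scal {m : ℕ} [NeZero m] (S : Set Plane) (φ : ZMod m → Plane) (g h : ZMod m) :
    Set Plane :=
  {s | s ∈ S ∧ ∃ j ∈ Idx g h, φ j = s}

/-- Total weight of a set of points. -/
def wsum (w : Plane → ℝ) (T : Set Plane) : ℝ := ∑ᶠ x ∈ T, w x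

/-- `s` is a rank-`t` center for `𝒜[g,h]`: (i) `|S[g,h]| ≤ t`; (ii) `α_g` or `α_h`
belongs to the group of `s`; (iii) the main sublist of `s` belongs to `𝒜[g,h]`;
(iv) if `t > 1` every other point of `S[g,h]` has all its sublists in `𝒜[g,h]`,
and otherwise `s` itself has all its sublists in `𝒜[g,h]`. -/
def IsRankCenter (A : SublistPartition n m) (p : ZMod n → Plane) (S : Set Plane)
    (φ : ZMod m → Plane) (t : ℕ) (g h : ZMod m) (s : Plane) : Prop :=
  s ∈ S ∧
  (Scal S φ g h).ncard ≤ t ∧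
  (φ g = s ∨ φ h = s) ∧
  (∃ j ∈ Idx g h, φ j = s ∧ s ∈ A.block p j) ∧
  (1 < t → ∀ s' ∈ Scal S φ g h, s' ≠ s → ∀ j : ZMod m, φ j = s' → j ∈ Idx g h) ∧
  (t ≤ 1 → ∀ j : ZMod m, φ j = s → j ∈ Idx g h)


/-! ### Auxiliary lemmas -/

set_option linter.unusedSectionVars false

lemma a46_sub_apply (x y : Plane) (i : Fin 2) : (x - y) i = x i - y i := rfl

lemma a46_det2_cyc (x y z : Plane) : det2 (y - x) (z - x) = det2 (z - y) (x - y) := by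
  simp only [det2, a46_sub_apply]; ring

lemma a46_det2_self (x : Plane) : det2 x x = 0 := by simp only [det2]; ring

lemma a46_plucker (v a b c : Plane) :
    det2 a c * det2 v b = det2 a b * det2 v c + det2 v a * det2 b c := by
  simp only [det2]; ring

lemma a46_udecomp (u : Plane →ₗ[ℝ] ℝ) (v : Plane) :
    u v = v 0 * u (EuclideanSpace.single 0 1) + v 1 * u (EuclideanSpace.single 1 1) := by
  have hv : v = v 0 • (EuclideanSpace.single (0 : Fin 2) (1:ℝ))
      + v 1 • EuclideanSpace.single (1 : Fin 2) (1:ℝ) := by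
    ext i
    fin_cases i <;> simp [EuclideanSpace.single_apply]
  conv_lhs => rw [hv]
  rw [map_add, map_smul, map_smul]
  simp [smul_eq_mul]

lemma a46_sep_contra (A B C D : Plane) (u : Plane →ₗ[ℝ] ℝ) (hu : u ≠ 0) (cc : ℝ)
    (hA : u A ≤ cc) (hB : cc ≤ u B) (hC : u C ≤ cc) (hD : cc ≤ u D)
    (d1 : 0 < det2 (B-A) (C-A)) (d2 : 0 < det2 (B-A) (D-A))
    (d3 : 0 < det2 (C-A) (D-A)) (d4 : 0 < det2 (C-B) (D-B)) : False := by
  set U0 := u (EuclideanSpace.single 0 1) with hU0def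
  set U1 := u (EuclideanSpace.single 1 1) with hU1def
  have eA := a46_udecomp u A
  have eB := a46_udecomp u B
  have eC := a46_udecomp u C
  have eD := a46_udecomp u D
  have key : det2 (B-A) (D-A) * (u C - cc) + det2 (C-B) (D-B) * (u A - cc)
      = det2 (C-A) (D-A) * (u B - cc) + det2 (B-A) (C-A) * (u D - cc) := by
    rw [eA, eB, eC, eD]; simp only [det2, a46_sub_apply]; ring
  have m1 : det2 (B-A) (D-A) * (u C - cc) ≤ 0 :=
    mul_nonpos_of_nonneg_of_nonpos d2.le (by linarith)
  have m2 : det2 (C-B) (D-B) * (u A - cc) ≤ 0 :=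
    mul_nonpos_of_nonneg_of_nonpos d4.le (by linarith)
  have m3 : 0 ≤ det2 (C-A) (D-A) * (u B - cc) :=
    mul_nonneg d3.le (by linarith)
  have m4 : 0 ≤ det2 (B-A) (C-A) * (u D - cc) :=
    mul_nonneg d1.le (by linarith)
  have zB : u B = cc := by
    have h0 : det2 (C-A) (D-A) * (u B - cc) = 0 := by linarith
    rcases mul_eq_zero.mp h0 with hq | hq
    · exact absurd hq d3.ne'
    · linarith
  have zC : u C = cc := by
    have h0 : det2 (B-A) (D-A) * (u C - cc) = 0 := by linarith
    rcases mul_eq_zero.mp h0 with hq | hq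
    · exact absurd hq d2.ne'
    · linarith
  have zA : u A = cc := by
    have h0 : det2 (C-B) (D-B) * (u A - cc) = 0 := by linarith
    rcases mul_eq_zero.mp h0 with hq | hq
    · exact absurd hq d4.ne'
    · linarith
  rw [eA] at zA; rw [eB] at zB; rw [eC] at zC
  have hU0 : det2 (B-A) (C-A) * U0 = 0 := by
    simp only [det2, a46_sub_apply]
    linear_combination (C 1 - A 1) * zB - (C 1 - A 1) * zA - (B 1 - A 1) * zC + (B 1 - A 1) * zA
  have hU1 : det2 (B-A) (C-A) * U1 = 0 := by
    simp only [det2, a46_sub_apply]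
    linear_combination (-(C 0 - A 0)) * zB + (C 0 - A 0) * zA + (B 0 - A 0) * zC - (B 0 - A 0) * zA
  have hU0' : U0 = 0 := by
    rcases mul_eq_zero.mp hU0 with hq | hq
    · exact absurd hq d1.ne'
    · exact hq
  have hU1' : U1 = 0 := by
    rcases mul_eq_zero.mp hU1 with hq | hq
    · exact absurd hq d1.ne'
    · exact hq
  apply hu
  apply LinearMap.ext
  intro v
  rw [a46_udecomp u v, ← hU0def, ← hU1def, hU0', hU1']
  simp

section a46conv
variable {n : ℕ} [NeZero n] {p : ZMod n → Plane}

lemma a46_natCast_ne {t : ℕ} (h1 : 0 < t) (h2 : t < n) : (t : ZMod n) ≠ 0 := by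
  intro hh
  have hv : (t : ZMod n).val = t := by rw [ZMod.val_natCast, Nat.mod_eq_of_lt h2]
  rw [hh, ZMod.val_zero] at hv
  omega

lemma a46_natCast_inj {s t : ℕ} (hs : s < n) (ht : t < n)
    (h : (s : ZMod n) = (t : ZMod n)) : s = t := by
  have := congrArg ZMod.val h
  rwa [ZMod.val_natCast, ZMod.val_natCast, Nat.mod_eq_of_lt hs, Nat.mod_eq_of_lt ht] at this

lemma a46_consec (hccw : CCWConvex p) (i0 : ZMod n) (t : ℕ) (h1 : 1 ≤ t) (h2 : t + 1 ≤ n - 1) :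
    0 < det2 (p (i0 + (t : ZMod n)) - p i0) (p (i0 + ((t+1 : ℕ) : ZMod n)) - p i0) := by
  have hn : 1 ≤ n := Nat.one_le_iff_ne_zero.mpr (NeZero.ne n)
  have key := hccw (i0 + (t : ZMod n)) i0 ?_ ?_
  · have e : (i0 + (t : ZMod n)) + 1 = i0 + ((t+1 : ℕ) : ZMod n) := by push_cast; ring
    rw [e] at key
    rw [a46_det2_cyc (p i0) (p (i0 + (t : ZMod n))) (p (i0 + ((t+1:ℕ) : ZMod n)))]
    exact key
  · intro hh
    have : (t : ZMod n) = 0 := by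
      have := hh.symm
      rwa [add_eq_left] at this
    exact a46_natCast_ne h1 (by omega) this
  · intro hh
    have e : (i0 + (t : ZMod n)) + 1 = i0 + ((t+1 : ℕ) : ZMod n) := by push_cast; ring
    rw [e] at hh
    have : ((t+1 : ℕ) : ZMod n) = 0 := by
      have := hh.symm
      rwa [add_eq_left] at this
    exact a46_natCast_ne (by omega) (by omega) this

lemma a46_halfplane (hccw : CCWConvex p) (i0 : ZMod n) (t : ℕ) (h1 : 2 ≤ t) (h2 : t ≤ n - 1) :
    0 < det2 (p (i0 + ((1:ℕ) : ZMod n)) - p i0) (p (i0 + (t : ZMod n)) - p i0) := by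
  have hn : 1 ≤ n := Nat.one_le_iff_ne_zero.mpr (NeZero.ne n)
  have key := hccw i0 (i0 + (t : ZMod n)) ?_ ?_
  · rw [Nat.cast_one]; exact key
  · intro hh
    have : (t : ZMod n) = 0 := by rwa [add_eq_left] at hh
    exact a46_natCast_ne (by omega) (by omega) this
  · intro hh
    have h3 : (t : ZMod n) = ((1:ℕ) : ZMod n) := by
      rw [Nat.cast_one]; exact add_left_cancel hh
    have := a46_natCast_inj (by omega) (by omega) h3
    omega

lemma a46_triple (hccw : CCWConvex p) (i0 : ZMod n) (b c : ℕ) (hb : 1 ≤ b) (hbc : b < c)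
    (hc : c ≤ n - 1) :
    0 < det2 (p (i0 + (b : ZMod n)) - p i0) (p (i0 + (c : ZMod n)) - p i0) := by
  suffices H : ∀ d : ℕ, b + 1 + d ≤ n - 1 →
      0 < det2 (p (i0 + (b : ZMod n)) - p i0) (p (i0 + ((b+1+d : ℕ) : ZMod n)) - p i0) by
    have := H (c - (b+1)) (by omega)
    rwa [show b + 1 + (c - (b+1)) = c from by omega] at this
  intro d
  induction d with
  | zero =>
    intro hle
    simpa using a46_consec hccw i0 b hb (by omega)
  | succ d ih =>
    intro hle
    have IH := ih (by omega)
    set C := b + 1 + d with hC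
    have hvB : 0 < det2 (p (i0 + ((1:ℕ) : ZMod n)) - p i0) (p (i0 + (C : ZMod n)) - p i0) :=
      a46_halfplane hccw i0 C (by omega) (by omega)
    have hvC : 0 < det2 (p (i0 + ((1:ℕ) : ZMod n)) - p i0)
        (p (i0 + ((C+1 : ℕ) : ZMod n)) - p i0) :=
      a46_halfplane hccw i0 (C+1) (by omega) (by omega)
    have hBC := a46_consec hccw i0 C (by omega) (by omega)
    have hva : 0 ≤ det2 (p (i0 + ((1:ℕ) : ZMod n)) - p i0) (p (i0 + (b : ZMod n)) - p i0) := by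
      rcases eq_or_lt_of_le hb with hh | hh
      · rw [← hh]
        exact le_of_eq (a46_det2_self _).symm
      · exact (a46_halfplane hccw i0 b (by omega) (by omega)).le
    have key := a46_plucker (p (i0 + ((1:ℕ) : ZMod n)) - p i0) (p (i0 + (b : ZMod n)) - p i0)
      (p (i0 + (C : ZMod n)) - p i0) (p (i0 + ((C+1 : ℕ) : ZMod n)) - p i0)
    rw [show b + 1 + (d+1) = C + 1 from by omega]
    nlinarith [key, IH, hvB, hvC, hBC, mul_pos IH hvC, mul_nonneg hva hBC.le]

end a46conv

lemma a46_lineSep_mono {A1 A2 B1 B2 : Set Plane} (hA : A1 ⊆ A2) (hB : B1 ⊆ B2)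
    (h : LineSep A2 B2) : LineSep A1 B1 := by
  obtain ⟨u, hu, c, h1, h2⟩ := h
  exact ⟨u, hu, c, fun x hx => h1 x (hA hx), fun x hx => h2 x (hB hx)⟩

lemma a46_not_lineSep {n : ℕ} [NeZero n] {p : ZMod n → Plane} (hccw : CCWConvex p)
    (i0 : ZMod n) (k2 k3 k4 : ℕ) (h2 : 1 ≤ k2) (h23 : k2 < k3) (h34 : k3 < k4)
    (h4 : k4 ≤ n - 1)
    (hsep : LineSep {p i0, p (i0 + (k3 : ZMod n))}
      {p (i0 + (k2 : ZMod n)), p (i0 + (k4 : ZMod n))}) :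
    False := by
  obtain ⟨u, hu, c, hle, hge⟩ := hsep
  have d1 := a46_triple hccw i0 k2 k3 h2 h23 (by omega)
  have d2 := a46_triple hccw i0 k2 k4 h2 (by omega) h4
  have d3 := a46_triple hccw i0 k3 k4 (by omega) h34 h4
  have d4' := a46_triple hccw (i0 + (k2 : ZMod n)) (k3 - k2) (k4 - k2)
    (by omega) (by omega) (by omega)
  have e3 : i0 + (k2 : ZMod n) + ((k3 - k2 : ℕ) : ZMod n) = i0 + (k3 : ZMod n) := by
    rw [add_assoc, ← Nat.cast_add, show k2 + (k3 - k2) = k3 from by omega]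
  have e4 : i0 + (k2 : ZMod n) + ((k4 - k2 : ℕ) : ZMod n) = i0 + (k4 : ZMod n) := by
    rw [add_assoc, ← Nat.cast_add, show k2 + (k4 - k2) = k4 from by omega]
  rw [e3, e4] at d4'
  exact a46_sep_contra (p i0) (p (i0 + (k2 : ZMod n))) (p (i0 + (k3 : ZMod n)))
    (p (i0 + (k4 : ZMod n))) u hu c (hle _ (by simp)) (hge _ (by simp)) (hle _ (by simp))
    (hge _ (by simp)) d1 d2 d3 d4'

lemma a46_cast_val_eq {m : ℕ} [NeZero m] (x : ZMod m) : ((x.val : ℕ) : ZMod m) = x :=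
  ZMod.natCast_rightInverse x

lemma a46_zmod_val_inj {m : ℕ} [NeZero m] {x y : ZMod m} (h : x.val = y.val) : x = y := by
  rw [← a46_cast_val_eq x, ← a46_cast_val_eq y, h]

lemma a46_mem_Idx_iff {m : ℕ} [NeZero m] {g h j : ZMod m} :
    j ∈ Idx g h ↔ (j - g).val ≤ (h - g).val := by
  unfold Idx
  simp only [Finset.mem_image, Finset.mem_range]
  constructor
  · rintro ⟨t, ht, rfl⟩
    have htm : t < m := lt_of_le_of_lt (Nat.lt_succ_iff.mp ht) (ZMod.val_lt _)
    rw [add_sub_cancel_left, ZMod.val_natCast, Nat.mod_eq_of_lt htm]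
    omega
  · intro hle
    refine ⟨(j - g).val, by omega, ?_⟩
    rw [a46_cast_val_eq]; ring

lemma a46_val_cast_sub_cast {m : ℕ} [NeZero m] {a c : ℕ} (ha : a < m) (hc : c < m) :
    ((c : ZMod m) - (a : ZMod m)).val = if a ≤ c then c - a else m + c - a := by
  split
  case isTrue hle =>
    rw [← Nat.cast_sub hle, ZMod.val_natCast, Nat.mod_eq_of_lt (by omega)]
  case isFalse hlt =>
    have h1 : ((m + c - a : ℕ) : ZMod m) = (c : ZMod m) - (a : ZMod m) := by
      rw [Nat.cast_sub (by omega), Nat.cast_add, ZMod.natCast_self, zero_add]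
    rw [← h1, ZMod.val_natCast, Nat.mod_eq_of_lt (by omega)]

lemma a46_off_succ [NeZero n] (A : SublistPartition n m) (j : ZMod m) :
    ((A.offset (j + 1) : ℕ) : ZMod n)
      = ((A.offset j : ℕ) : ZMod n) + ((A.len j : ℕ) : ZMod n) := by
  have hm : 0 < m := Nat.pos_of_ne_zero (NeZero.ne m)
  have hvj : j.val < m := ZMod.val_lt j
  by_cases hcase : j.val + 1 < m
  · haveI : Fact (1 < m) := ⟨by omega⟩
    have hval : (j + 1).val = j.val + 1 := by
      rw [ZMod.val_add, ZMod.val_one, Nat.mod_eq_of_lt hcase]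
    have hset : Finset.univ.filter (fun j' : ZMod m => j'.val < (j+1).val)
        = insert j (Finset.univ.filter fun j' : ZMod m => j'.val < j.val) := by
      ext x
      simp only [Finset.mem_filter, Finset.mem_insert, Finset.mem_univ, true_and, hval]
      constructor
      · intro hx
        rcases Nat.lt_succ_iff_lt_or_eq.mp hx with hh | hh
        · exact Or.inr hh
        · exact Or.inl (a46_zmod_val_inj hh)
      · rintro (rfl | hx)
        · omega
        · omega
    have hoff : A.offset (j + 1) = A.len j + A.offset j := by
      unfold SublistPartition.offset
      rw [hset, Finset.sum_insert (by simp)]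
    rw [hoff]; push_cast; ring
  · have hm1 : j.val = m - 1 := by omega
    have hj1 : j + 1 = 0 := by
      have hj : j = ((m - 1 : ℕ) : ZMod m) := by rw [← hm1, a46_cast_val_eq]
      have e1 : ((m - 1 : ℕ) : ZMod m) + 1 = ((m - 1 + 1 : ℕ) : ZMod m) := by
        rw [Nat.cast_add, Nat.cast_one]
      rw [hj, e1, show m - 1 + 1 = m from by omega, ZMod.natCast_self]
    have hoff0 : A.offset 0 = 0 := by
      unfold SublistPartition.offset
      simp [ZMod.val_zero]
    have hsum : A.len j + A.offset j = n := by
      have huniv : insert j (Finset.univ.filter fun j' : ZMod m => j'.val < j.val)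
          = (Finset.univ : Finset (ZMod m)) := by
        apply Finset.eq_univ_iff_forall.mpr
        intro x
        simp only [Finset.mem_insert, Finset.mem_filter, Finset.mem_univ, true_and]
        by_cases hx : x = j
        · exact Or.inl hx
        · refine Or.inr ?_
          have h1 : x.val < m := ZMod.val_lt x
          have h2 : x.val ≠ j.val := fun hh => hx (a46_zmod_val_inj hh)
          omega
      have hls := A.len_sum
      rw [← huniv, Finset.sum_insert (by simp)] at hls
      unfold SublistPartition.offset
      exact hls
    rw [hj1, hoff0]
    rw [show ((A.offset j : ℕ) : ZMod n) + ((A.len j : ℕ) : ZMod n)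
        = ((A.len j + A.offset j : ℕ) : ZMod n) from by push_cast; ring,
      hsum, ZMod.natCast_self, Nat.cast_zero]

lemma a46_blockpos [NeZero n] (A : SublistPartition n m) (g : ZMod m) (s : ℕ) :
    ((A.offset (g + (s : ZMod m)) : ℕ) : ZMod n)
      = ((A.offset g : ℕ) : ZMod n)
        + ((∑ s' ∈ Finset.range s, A.len (g + (s' : ZMod m)) : ℕ) : ZMod n) := by
  induction s with
  | zero => simp
  | succ s ih =>
    have e : g + ((s + 1 : ℕ) : ZMod m) = (g + (s : ZMod m)) + 1 := by push_cast; ring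
    rw [e, a46_off_succ, ih, Finset.sum_range_succ]
    push_cast; ring

/-- **Lemma 4.6.** Suppose `p_i ∈ S` is a rank-`t` center of `𝒜[g,h]` whose main
sublist `α_f` lies in `𝒜[g,h]` but is not an end sublist of `𝒜[g,h]`, while the
counterclockwise end sublist `α_h` belongs to the group of `p_i`. Then there is `t'`
with `2 ≤ t' ≤ t - 1` such that `p_i` is a rank-`t'` center of `𝒜[f,h]` and a
rank-`(t-t'+1)` center of `𝒜[g,f]`; moreover,
`w(S[g,h]) = w(S[f,h]) + w(S[g,f]) - w(p_i)`. -/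
theorem rank_center_decomposition_bidirectional {n m : ℕ} [NeZero n] [NeZero m]
    (p : ZMod n → Plane) (hccw : CCWConvex p)
    (r : Plane → ℝ) (hr : ∀ i, 0 ≤ r (p i)) (w : Plane → ℝ)
    (S : Set Plane) (hS : IsDominating p r S)
    (A : SublistPartition n m) (φ : ZMod m → Plane)
    (hφ : IsLemma31Assignment A p r S φ)
    (t : ℕ) (g h f : ZMod m) (pi : Plane)
    (hrank : IsRankCenter A p S φ t g h pi)
    (hfIdx : f ∈ Idx g h) (hfg : f ≠ g) (hfh : f ≠ h)
    (hmain : φ f = pi ∧ pi ∈ A.block p f)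
    (hend : φ h = pi) :
    ∃ t' : ℕ, 2 ≤ t' ∧ t' ≤ t - 1 ∧
      IsRankCenter A p S φ t' f h pi ∧
      IsRankCenter A p S φ (t - t' + 1) g f pi ∧
      wsum w (Scal S φ g h) =
        wsum w (Scal S φ f h) + wsum w (Scal S φ g f) - w pi := by
  obtain ⟨⟨hφS, hφdom⟩, hsepa, hmains, hadj⟩ := hφ
  obtain ⟨hpiS, hcard, hend2, hmain2, hbig, hsmall⟩ := hrank
  have hm : 0 < m := Nat.pos_of_ne_zero (NeZero.ne m)
  set a := (f - g).val with ha_def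
  set b := (h - g).val with hb_def
  have haval : a < m := ZMod.val_lt _
  have hbval : b < m := ZMod.val_lt _
  have jrepr : ∀ j : ZMod m, j = g + (((j - g).val : ℕ) : ZMod m) := by
    intro j; rw [a46_cast_val_eq]; ring
  have ha0 : a ≠ 0 := by
    intro hh
    apply hfg
    have h1 := jrepr f
    rw [← ha_def, hh, Nat.cast_zero, add_zero] at h1
    exact h1
  have hab_le : a ≤ b := a46_mem_Idx_iff.mp hfIdx
  have hf_eq : f = g + (a : ZMod m) := by rw [ha_def]; exact jrepr f
  have hh_eq : h = g + (b : ZMod m) := by rw [hb_def]; exact jrepr h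
  have hab : a ≠ b := by
    intro hh
    apply hfh
    rw [hf_eq, hh, ← hh_eq]
  have hm3 : 3 ≤ m := by omega
  have hhf_val : (h - f).val = b - a := by
    have e : h - f = ((b : ℕ) : ZMod m) - ((a : ℕ) : ZMod m) := by
      rw [hf_eq, hh_eq]; ring
    rw [e, a46_val_cast_sub_cast haval hbval, if_pos hab_le]
  have memgf : ∀ j : ZMod m, j ∈ Idx g f ↔ (j - g).val ≤ a := fun j => a46_mem_Idx_iff
  have memgh : ∀ j : ZMod m, j ∈ Idx g h ↔ (j - g).val ≤ b := fun j => a46_mem_Idx_iff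
  have memfh : ∀ j : ZMod m, j ∈ Idx f h ↔ (a ≤ (j - g).val ∧ (j - g).val ≤ b) := by
    intro j
    have e0 : (j ∈ Idx f h) ↔ (j - f).val ≤ b - a := by rw [a46_mem_Idx_iff, hhf_val]
    rw [e0]
    have hcj : (j - g).val < m := ZMod.val_lt _
    have e : j - f = (((j - g).val : ℕ) : ZMod m) - ((a : ℕ) : ZMod m) := by
      rw [ha_def, a46_cast_val_eq, a46_cast_val_eq]; ring
    rw [e, a46_val_cast_sub_cast haval hcj]
    split
    case isTrue hle => omega
    case isFalse hlt => omega
  have hunionIdx : ∀ j : ZMod m, j ∈ Idx g h ↔ (j ∈ Idx g f ∨ j ∈ Idx f h) := by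
    intro j; rw [memgh, memgf, memfh]; omega
  have hSfin : S.Finite := (Set.finite_range p).subset hS.1
  have hfin : ∀ x y : ZMod m, (Scal S φ x y).Finite := fun x y =>
    hSfin.subset fun s hs => hs.1
  have hScup : Scal S φ g h = Scal S φ g f ∪ Scal S φ f h := by
    ext s
    simp only [Scal, Set.mem_setOf_eq, Set.mem_union]
    constructor
    · rintro ⟨hsS, j, hj, rfl⟩
      rcases (hunionIdx j).mp hj with hcase | hcase
      · exact Or.inl ⟨hsS, j, hcase, rfl⟩
      · exact Or.inr ⟨hsS, j, hcase, rfl⟩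
    · rintro (⟨hsS, j, hj, rfl⟩ | ⟨hsS, j, hj, rfl⟩)
      · exact ⟨hsS, j, (hunionIdx j).mpr (Or.inl hj), rfl⟩
      · exact ⟨hsS, j, (hunionIdx j).mpr (Or.inr hj), rfl⟩
  have hfIdxfh : f ∈ Idx f h := (memfh f).mpr ⟨le_rfl, hab_le⟩
  have hfIdxgf : f ∈ Idx g f := (memgf f).mpr le_rfl
  -- the geometric core: the two parts can share no center besides `pi`
  have hScap : Scal S φ g f ∩ Scal S φ f h = {pi} := by
    apply Set.eq_singleton_iff_unique_mem.mpr
    constructor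
    · exact ⟨⟨hpiS, f, hfIdxgf, hmain.1⟩, ⟨hpiS, f, hfIdxfh, hmain.1⟩⟩
    · rintro s' ⟨⟨hs'S, j1, hj1, hφj1⟩, ⟨-, j2, hj2, hφj2⟩⟩
      by_contra hne
      have hj1f : j1 ≠ f := fun hh => hne (by rw [← hφj1, hh, hmain.1])
      have hj2f : j2 ≠ f := fun hh => hne (by rw [← hφj2, hh, hmain.1])
      have hj2h : j2 ≠ h := fun hh => hne (by rw [← hφj2, hh, hend])
      set s1 := (j1 - g).val with hs1_def
      set s2 := (j2 - g).val with hs2_def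
      have hj1r : j1 = g + (s1 : ZMod m) := by rw [hs1_def]; exact jrepr j1
      have hj2r : j2 = g + (s2 : ZMod m) := by rw [hs2_def]; exact jrepr j2
      have hs1a : s1 < a := by
        have h1 : s1 ≤ a := (memgf j1).mp hj1
        rcases lt_or_eq_of_le h1 with hh | hh
        · exact hh
        · exact absurd (by rw [hj1r, hh, ← hf_eq]) hj1f
      have hs2ab : a ≤ s2 ∧ s2 ≤ b := (memfh j2).mp hj2
      have hs2a : a < s2 := by
        rcases lt_or_eq_of_le hs2ab.1 with hh | hh
        · exact hh
        · exact absurd (by rw [hj2r, ← hh, ← hf_eq]) hj2f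
      have hs2b : s2 < b := by
        rcases lt_or_eq_of_le hs2ab.2 with hh | hh
        · exact hh
        · exact absurd (by rw [hj2r, hh, ← hh_eq]) hj2h
      set σ : ℕ → ℕ := fun s => ∑ s' ∈ Finset.range s, A.len (g + (s' : ZMod m)) with hσ_def
      have hσsucc : ∀ s : ℕ, σ (s + 1) = σ s + A.len (g + (s : ZMod m)) := fun s =>
        Finset.sum_range_succ _ s
      have hσmono : ∀ s s' : ℕ, s < s' → σ s + A.len (g + (s : ZMod m)) ≤ σ s' := by
        intro s s' hss
        rw [← hσsucc]
        exact Finset.sum_le_sum_of_subset (Finset.range_subset_range.mpr hss)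
      have hσn : ∀ s : ℕ, s < m → σ (s + 1) ≤ n := by
        intro s hs
        have hinj : ∀ x ∈ Finset.range (s+1), ∀ y ∈ Finset.range (s+1),
            g + (x : ZMod m) = g + (y : ZMod m) → x = y := by
          intro x hx y hy hxy
          simp only [Finset.mem_range] at hx hy
          have h1 : (x : ZMod m) = (y : ZMod m) := add_left_cancel hxy
          exact a46_natCast_inj (by omega) (by omega) h1
        calc σ (s+1)
            = ∑ j' ∈ (Finset.range (s+1)).image (fun s' : ℕ => g + (s' : ZMod m)), A.len j' :=
              (Finset.sum_image hinj).symm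
          _ ≤ ∑ j', A.len j' := Finset.sum_le_sum_of_subset (Finset.subset_univ _)
          _ = n := A.len_sum
      obtain ⟨t2, ht2, hpival⟩ := hmain.2
      rw [Set.mem_Iio] at ht2
      have hlenf : A.len (g + (a : ZMod m)) = A.len f := by rw [← hf_eq]
      have h12 : σ s1 < σ a + t2 := by
        have hmn := hσmono s1 a hs1a
        have hp := A.len_pos (g + (s1 : ZMod m))
        omega
      have h23 : σ a + t2 < σ s2 := by
        have hmn := hσmono a s2 hs2a
        rw [hlenf] at hmn
        omega
      have h34 : σ s2 < σ b := by
        have hmn := hσmono s2 b hs2b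
        have hp := A.len_pos (g + (s2 : ZMod m))
        omega
      have h4n : σ b ≤ n - 1 := by
        have h1 := hσn b hbval
        rw [hσsucc] at h1
        have hp := A.len_pos (g + (b : ZMod m))
        omega
      set i0 : ZMod n := A.start + ((A.offset g : ℕ) : ZMod n) + ((σ s1 : ℕ) : ZMod n) with hi0
      have hpos : ∀ (j : ZMod m) (s t : ℕ), j = g + (s : ZMod m) →
          A.start + ((A.offset j : ℕ) : ZMod n) + ((t : ℕ) : ZMod n)
            = A.start + ((A.offset g : ℕ) : ZMod n) + (((σ s + t : ℕ)) : ZMod n) := by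
        intro j s t hj
        rw [hj, a46_blockpos A g s]
        simp only [hσ_def]
        push_cast
        ring
      have hmem : ∀ (j : ZMod m) (s t : ℕ), j = g + (s : ZMod m) → t < A.len j →
          σ s1 ≤ σ s + t → p (i0 + ((σ s + t - σ s1 : ℕ) : ZMod n)) ∈ A.block p j := by
        intro j s t hj ht hst
        refine ⟨t, Set.mem_Iio.mpr ht, ?_⟩
        show p (A.start + ((A.offset j : ℕ) : ZMod n) + ((t : ℕ) : ZMod n)) = _
        have harith : i0 + ((σ s + t - σ s1 : ℕ) : ZMod n)
            = A.start + ((A.offset g : ℕ) : ZMod n) + ((σ s + t : ℕ) : ZMod n) := by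
          rw [hi0, add_assoc, ← Nat.cast_add,
            show σ s1 + (σ s + t - σ s1) = σ s + t from by omega]
        rw [harith, hpos j s t hj]
      have m1 : p i0 ∈ group A p φ s' := by
        have hmm := hmem j1 s1 0 hj1r (A.len_pos j1) (by omega)
        rw [show σ s1 + 0 - σ s1 = 0 from by omega] at hmm
        rw [show i0 + ((0:ℕ) : ZMod n) = i0 from by simp] at hmm
        exact ⟨j1, hφj1, hmm⟩
      have m3 : p (i0 + ((σ s2 - σ s1 : ℕ) : ZMod n)) ∈ group A p φ s' := by
        have hmm := hmem j2 s2 0 hj2r (A.len_pos j2) (by omega)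
        rw [show σ s2 + 0 - σ s1 = σ s2 - σ s1 from by omega] at hmm
        exact ⟨j2, hφj2, hmm⟩
      have m2 : p (i0 + ((σ a + t2 - σ s1 : ℕ) : ZMod n)) ∈ group A p φ pi := by
        have hmm := hmem f a t2 hf_eq ht2 (by omega)
        exact ⟨f, hmain.1, hmm⟩
      have m4 : p (i0 + ((σ b - σ s1 : ℕ) : ZMod n)) ∈ group A p φ pi := by
        have hmm := hmem h b 0 hh_eq (A.len_pos h) (by omega)
        rw [show σ b + 0 - σ s1 = σ b - σ s1 from by omega] at hmm
        exact ⟨h, hend, hmm⟩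
      refine a46_not_lineSep hccw i0 (σ a + t2 - σ s1) (σ s2 - σ s1) (σ b - σ s1)
        (by omega) (by omega) (by omega) (by omega) ?_
      refine a46_lineSep_mono ?_ ?_ (hsepa s' hs'S pi hpiS hne)
      · intro x hx
        rcases hx with rfl | hx
        · exact m1
        · rw [Set.mem_singleton_iff] at hx
          rw [hx]
          exact m3
      · intro x hx
        rcases hx with rfl | hx
        · exact m2
        · rw [Set.mem_singleton_iff] at hx
          rw [hx]
          exact m4
  -- counting
  have hpiSfh : pi ∈ Scal S φ f h := ⟨hpiS, f, hfIdxfh, hmain.1⟩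
  have hpiSgf : pi ∈ Scal S φ g f := ⟨hpiS, f, hfIdxgf, hmain.1⟩
  have hone_ne : (1 : ZMod m) ≠ 0 := by
    have h1 : ((1:ℕ) : ZMod m) ≠ 0 := a46_natCast_ne (by omega) (by omega)
    simpa using h1
  have hφf1 : φ (f + 1) ≠ pi := by
    have hf1ne : f + 1 ≠ f := fun hh => hone_ne (add_eq_left.mp hh)
    have := hadj f hf1ne
    rwa [hmain.1] at this
  have hf1mem : φ (f + 1) ∈ Scal S φ f h := by
    refine ⟨hφS (f+1), f+1, ?_, rfl⟩
    rw [memfh]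
    have e : (f + 1) - g = ((a + 1 : ℕ) : ZMod m) := by rw [hf_eq]; push_cast; ring
    rw [e, ZMod.val_natCast, Nat.mod_eq_of_lt (by omega)]
    omega
  have hφfm1 : φ (f - 1) ≠ pi := by
    have hne' : (f - 1) + 1 ≠ f - 1 := fun hh => hone_ne (add_eq_left.mp hh)
    have := hadj (f - 1) hne'
    rw [sub_add_cancel, hmain.1] at this
    exact this.symm
  have hfm1mem : φ (f - 1) ∈ Scal S φ g f := by
    refine ⟨hφS (f-1), f - 1, ?_, rfl⟩
    rw [memgf]
    have e : (f - 1) - g = ((a - 1 : ℕ) : ZMod m) := by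
      rw [hf_eq, Nat.cast_sub (by omega), Nat.cast_one]; ring
    rw [e, ZMod.val_natCast, Nat.mod_eq_of_lt (by omega)]
    omega
  have hpair1 : 2 ≤ (Scal S φ f h).ncard := by
    have hsub : ({pi, φ (f+1)} : Set Plane) ⊆ Scal S φ f h := by
      intro x hx
      rcases hx with rfl | hx
      · exact hpiSfh
      · rw [Set.mem_singleton_iff] at hx
        rw [hx]
        exact hf1mem
    calc 2 = ({pi, φ (f+1)} : Set Plane).ncard := (Set.ncard_pair (Ne.symm hφf1)).symm
      _ ≤ _ := Set.ncard_le_ncard hsub (hfin f h)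
  have hpair2 : 2 ≤ (Scal S φ g f).ncard := by
    have hsub : ({pi, φ (f-1)} : Set Plane) ⊆ Scal S φ g f := by
      intro x hx
      rcases hx with rfl | hx
      · exact hpiSgf
      · rw [Set.mem_singleton_iff] at hx
        rw [hx]
        exact hfm1mem
    calc 2 = ({pi, φ (f-1)} : Set Plane).ncard := (Set.ncard_pair (Ne.symm hφfm1)).symm
      _ ≤ _ := Set.ncard_le_ncard hsub (hfin g f)
  have hcupcard : (Scal S φ g h).ncard + 1
      = (Scal S φ g f).ncard + (Scal S φ f h).ncard := by
    have hq := Set.ncard_union_add_ncard_inter (Scal S φ g f) (Scal S φ f h)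
      (hfin g f) (hfin f h)
    rw [← hScup, hScap, Set.ncard_singleton] at hq
    exact hq
  refine ⟨(Scal S φ f h).ncard, hpair1, by omega, ?_, ?_, ?_⟩
  · refine ⟨hpiS, le_rfl, Or.inl hmain.1, ⟨f, hfIdxfh, hmain.1, hmain.2⟩, ?_, ?_⟩
    · intro ht1 s' hs' hs'ne j hjφ
      have hs'gh : s' ∈ Scal S φ g h := by rw [hScup]; exact Or.inr hs'
      have ht : 1 < t := by omega
      have hj := hbig ht s' hs'gh hs'ne j hjφ
      rcases (hunionIdx j).mp hj with hL | hR
      · exfalso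
        apply hs'ne
        have hmem2 : s' ∈ Scal S φ g f ∩ Scal S φ f h := ⟨⟨hs'.1, j, hL, hjφ⟩, hs'⟩
        rw [hScap] at hmem2
        exact hmem2
      · exact hR
    · intro hle
      exact absurd hle (by omega)
  · refine ⟨hpiS, by omega, Or.inr hmain.1, ⟨f, hfIdxgf, hmain.1, hmain.2⟩, ?_, ?_⟩
    · intro ht1 s' hs' hs'ne j hjφ
      have hs'gh : s' ∈ Scal S φ g h := by rw [hScup]; exact Or.inl hs'
      have ht : 1 < t := by omega
      have hj := hbig ht s' hs'gh hs'ne j hjφ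
      rcases (hunionIdx j).mp hj with hL | hR
      · exact hL
      · exfalso
        apply hs'ne
        have hmem2 : s' ∈ Scal S φ g f ∩ Scal S φ f h := ⟨hs', ⟨hs'.1, j, hR, hjφ⟩⟩
        rw [hScap] at hmem2
        exact hmem2
    · intro hle
      exact absurd hle (by omega)
  · have hdisj : Disjoint (Scal S φ g f) (Scal S φ f h \ Scal S φ g f) :=
      disjoint_sdiff_self_right
    have e1 : wsum w (Scal S φ g h)
        = wsum w (Scal S φ g f) + wsum w (Scal S φ f h \ Scal S φ g f) := by
      rw [hScup, ← Set.union_diff_self]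
      exact finsum_mem_union hdisj (hfin g f) (hfin f h).diff
    have e2 : wsum w (Scal S φ f h)
        = wsum w (Scal S φ f h \ Scal S φ g f) + w pi := by
      have hdisj2 : Disjoint (Scal S φ f h \ Scal S φ g f) (Scal S φ f h ∩ Scal S φ g f) :=
        disjoint_sdiff_self_left.mono_right Set.inter_subset_right
      calc wsum w (Scal S φ f h)
          = wsum w ((Scal S φ f h \ Scal S φ g f) ∪ (Scal S φ f h ∩ Scal S φ g f)) := by
            rw [Set.diff_union_inter]
        _ = wsum w (Scal S φ f h \ Scal S φ g f) + wsum w (Scal S φ f h ∩ Scal S φ g f) :=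
            finsum_mem_union hdisj2 (hfin f h).diff ((hfin f h).inter_of_left _)
        _ = wsum w (Scal S φ f h \ Scal S φ g f) + w pi := by
            rw [Set.inter_comm, hScap]
            unfold wsum
            rw [finsum_mem_singleton]
    linarith [e1, e2]


end
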